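/- Let n ≥ 1, let ρ₁, ρ₂ be n×n positive definite Hermitian complex matrices of trace 1, let σ be an n×n positive definite Hermitian matrix of trace 1, and let t ∈ (0, 1). Then S(t·ρ₁ + (1−t)·ρ₂ ‖ σ) ≥ t·S(ρ₁‖σ) + (1−t)·S(ρ₂‖σ) + t·Real.log t + (1−t)·Real.log (1−t). (This is the finite-dimensional version of the almost-affinity lower bound for the relative entropy proved in the paper via the operator monotonicity of the inverse and the logarithm applied to relative modular operators; combined with convexity it shows that the mean relative entropy s(φ‖ω) is affine in its first argument, a key step in the proof of Theorem 3.) -/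

import Mathlib

open scoped ComplexOrder

/-- The matrix logarithm of a Hermitian complex matrix, defined through the continuous
functional calculus: apply `Real.log` to the eigenvalues in a spectral decomposition
(junk value `0` for non-Hermitian matrices). -/
noncomputable def matLog {n : ℕ} (M : Matrix (Fin n) (Fin n) ℂ) :
    Matrix (Fin n) (Fin n) ℂ :=
  if hM : M.IsHermitian then
    (hM.eigenvectorUnitary : Matrix (Fin n) (Fin n) ℂ) *
      Matrix.diagonal (fun i => (Real.log (hM.eigenvalues i) : ℂ)) *
      star (hM.eigenvectorUnitary : Matrix (Fin n) (Fin n) ℂ)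
  else 0

/-- The quantum relative entropy `S(ρ‖σ) = Re (Tr (ρ (log ρ − log σ)))` of two density
matrices. -/
noncomputable def relEnt {n : ℕ} (ρ σ : Matrix (Fin n) (Fin n) ℂ) : ℝ :=
  (Matrix.trace (ρ * (matLog ρ - matLog σ))).re

section helpers

open Matrix MeasureTheory Set Filter


variable {n : ℕ} {A B : Matrix (Fin n) (Fin n) ℂ}



lemma matLog_eq_cfc {M : Matrix (Fin n) (Fin n) ℂ} (hM : M.IsHermitian) :
    matLog M = cfc Real.log M := by
  rw [matLog, dif_pos hM, hM.cfc_eq, Matrix.IsHermitian.cfc]; rfl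

lemma matLog_eq_cfc' {M : Matrix (Fin n) (Fin n) ℂ} (hM : M.IsHermitian) :
    matLog M = hM.cfc Real.log := by
  rw [matLog_eq_cfc hM, hM.cfc_eq]

-- cfc congruence on eigenvalues
lemma mcfc_congr (hA : A.IsHermitian) {f g : ℝ → ℝ}
    (h : ∀ k, f (hA.eigenvalues k) = g (hA.eigenvalues k)) : hA.cfc f = hA.cfc g := by
  unfold Matrix.IsHermitian.cfc
  have : (RCLike.ofReal ∘ f ∘ hA.eigenvalues : Fin n → ℂ)
      = RCLike.ofReal ∘ g ∘ hA.eigenvalues := by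
    funext k; simp [h k]
  rw [this]

lemma mcfc_mul (hA : A.IsHermitian) (f g : ℝ → ℝ) :
    hA.cfc f * hA.cfc g = hA.cfc (fun x => f x * g x) := by
  unfold Matrix.IsHermitian.cfc
  simp only [Unitary.conjStarAlgAut_apply]
  have h1 : (star (hA.eigenvectorUnitary : Matrix (Fin n) (Fin n) ℂ)) *
      (hA.eigenvectorUnitary : Matrix (Fin n) (Fin n) ℂ) = 1 :=
    Unitary.star_mul_self_of_mem (SetLike.coe_mem _)
  calc _ = (hA.eigenvectorUnitary : Matrix (Fin n) (Fin n) ℂ) *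
        (Matrix.diagonal (RCLike.ofReal ∘ f ∘ hA.eigenvalues) *
          ((star (hA.eigenvectorUnitary : Matrix (Fin n) (Fin n) ℂ)) *
            (hA.eigenvectorUnitary : Matrix (Fin n) (Fin n) ℂ)) *
          Matrix.diagonal (RCLike.ofReal ∘ g ∘ hA.eigenvalues)) *
        star (hA.eigenvectorUnitary : Matrix (Fin n) (Fin n) ℂ) := by
        simp only [mul_assoc]
    _ = _ := by
        rw [h1, mul_one, diagonal_mul_diagonal]
        congr 1
        funext i
        simp [Function.comp_def]

lemma mcfc_add (hA : A.IsHermitian) (f g : ℝ → ℝ) :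
    hA.cfc f + hA.cfc g = hA.cfc (fun x => f x + g x) := by
  unfold Matrix.IsHermitian.cfc
  simp only [Unitary.conjStarAlgAut_apply]
  rw [← add_mul, ← mul_add, diagonal_add]
  congr 2
  funext i
  simp [Function.comp_def]

lemma mcfc_const (hA : A.IsHermitian) (c : ℝ) :
    hA.cfc (fun _ => c) = (c : ℂ) • 1 := by
  unfold Matrix.IsHermitian.cfc
  simp only [Unitary.conjStarAlgAut_apply]
  have : Matrix.diagonal (RCLike.ofReal ∘ (fun _ : ℝ => c) ∘ hA.eigenvalues)
      = (c : ℂ) • (1 : Matrix (Fin n) (Fin n) ℂ) := by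
    funext i j
    by_cases h : i = j <;> simp [Matrix.diagonal, h]
  rw [this, Matrix.mul_smul, Matrix.smul_mul, mul_one, Unitary.mul_star_self_of_mem (SetLike.coe_mem _)]

lemma mcfc_one (hA : A.IsHermitian) : hA.cfc (fun _ => 1) = 1 := by
  rw [mcfc_const hA 1, Complex.ofReal_one, one_smul]

lemma mcfc_id (hA : A.IsHermitian) : hA.cfc (fun x => x) = A := by
  unfold Matrix.IsHermitian.cfc
  exact hA.spectral_theorem.symm

lemma mcfc_isHermitian (hA : A.IsHermitian) (f : ℝ → ℝ) : (hA.cfc f).IsHermitian := by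
  rw [← hA.cfc_eq]
  exact cfc_predicate _ _

lemma quadForm (hA : A.IsHermitian) (f : ℝ → ℝ) (x : Fin n → ℂ) :
    star x ⬝ᵥ (hA.cfc f *ᵥ x) =
      ((∑ k, f (hA.eigenvalues k) *
        ‖((star (hA.eigenvectorUnitary : Matrix (Fin n) (Fin n) ℂ)) *ᵥ x) k‖ ^ 2 : ℝ) : ℂ) := by
  set U := (hA.eigenvectorUnitary : Matrix (Fin n) (Fin n) ℂ) with hU
  set y := (star U) *ᵥ x with hy
  have hsy : star y = star x ᵥ* U := by
    rw [hy, star_mulVec, star_eq_conjTranspose, conjTranspose_conjTranspose]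
  have h1 : star x ⬝ᵥ (hA.cfc f *ᵥ x) =
      star y ⬝ᵥ (diagonal (RCLike.ofReal ∘ f ∘ hA.eigenvalues) *ᵥ y) := by
    unfold Matrix.IsHermitian.cfc
    simp only [Unitary.conjStarAlgAut_apply]
    rw [← mulVec_mulVec, ← mulVec_mulVec, Matrix.dotProduct_mulVec (star x) U, hsy]
  rw [h1]
  push_cast
  simp only [dotProduct, Matrix.mulVec_diagonal, Pi.star_apply, Function.comp_apply]
  congr 1
  ext k
  rw [show star (y k) * ((RCLike.ofReal (f (hA.eigenvalues k)) : ℂ) * y k)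
      = (RCLike.ofReal (f (hA.eigenvalues k)) : ℂ) * (star (y k) * y k) by ring]
  congr 1
  rw [RCLike.star_def, RCLike.conj_mul]
  norm_cast

lemma mcfc_posSemidef (hA : A.IsHermitian) {f : ℝ → ℝ}
    (hf : ∀ k, 0 ≤ f (hA.eigenvalues k)) : (hA.cfc f).PosSemidef := by
  refine Matrix.PosSemidef.of_dotProduct_mulVec_nonneg (mcfc_isHermitian hA f) (fun x => ?_)
  rw [quadForm hA f x, Complex.zero_le_real]
  exact Finset.sum_nonneg fun k _ => mul_nonneg (hf k) (by positivity)

lemma mcfc_posDef (hA : A.IsHermitian) {f : ℝ → ℝ}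
    (hf : ∀ k, 0 < f (hA.eigenvalues k)) : (hA.cfc f).PosDef := by
  refine Matrix.PosDef.of_dotProduct_mulVec_pos (mcfc_isHermitian hA f) (fun x hx => ?_)
  rw [quadForm hA f x, Complex.zero_lt_real]
  set U := (hA.eigenvectorUnitary : Matrix (Fin n) (Fin n) ℂ) with hU
  set y := (star U) *ᵥ x with hy
  have hyne : y ≠ 0 := by
    intro h
    apply hx
    have hUU : U * star U = 1 := Unitary.mul_star_self_of_mem (SetLike.coe_mem _)
    have : U *ᵥ y = x := by
      rw [hy, mulVec_mulVec, hUU, one_mulVec]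
    rw [← this, h, mulVec_zero]
  obtain ⟨k, hk⟩ := Function.ne_iff.mp hyne
  refine Finset.sum_pos' (fun k _ => mul_nonneg (hf k).le (by positivity)) ⟨k, Finset.mem_univ k, ?_⟩
  exact mul_pos (hf k) (pow_pos (norm_pos_iff.mpr hk) 2)

lemma mcfc_inv (hA : A.IsHermitian) {f : ℝ → ℝ}
    (hf : ∀ k, f (hA.eigenvalues k) ≠ 0) : (hA.cfc f)⁻¹ = hA.cfc fun x => (f x)⁻¹ := by
  apply Matrix.inv_eq_left_inv
  rw [mcfc_mul]
  rw [mcfc_congr hA (g := fun _ => 1) (fun k => by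
    simp [inv_mul_cancel₀ (hf k)])]
  exact mcfc_one hA

section parts
lemma scalar_log_deriv {lam : ℝ} (hlam : 0 < lam) {s : ℝ} (hs : s ∈ Ici (0:ℝ)) :
    HasDerivAt (fun s => Real.log (1 + s) - Real.log (lam + s))
      (1/(1+s) - 1/(lam+s)) s := by
  have hs0 : (0:ℝ) ≤ s := hs
  have h1 : HasDerivAt (fun s : ℝ => 1 + s) 1 s := by simpa using (hasDerivAt_id s).const_add 1
  have h2 : HasDerivAt (fun s : ℝ => lam + s) 1 s := by
    simpa using (hasDerivAt_id s).const_add lam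
  have g1 := h1.log (by positivity)
  have g2 := h2.log (by positivity)
  exact g1.sub g2

lemma scalar_log_tendsto {lam : ℝ} (hlam : 0 < lam) :
    Tendsto (fun s => Real.log (1 + s) - Real.log (lam + s)) atTop (nhds 0) := by
  have h2 : Tendsto (fun s : ℝ => (1 + s) / (lam + s)) atTop (nhds 1) := by
    have : Tendsto (fun s : ℝ => 1 + (1 - lam) / (lam + s)) atTop (nhds (1 + 0)) := by
      refine Tendsto.const_add 1 ?_
      exact Tendsto.div_atTop tendsto_const_nhds (tendsto_atTop_add_const_left _ _ tendsto_id)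
    rw [add_zero] at this
    apply this.congr'
    filter_upwards [eventually_gt_atTop (max 0 (-lam))] with s hs
    have h1 : 0 < lam + s := by have := lt_of_le_of_lt (le_max_right 0 (-lam)) hs; linarith
    field_simp
    ring
  have h3 : Tendsto (fun s : ℝ => Real.log ((1 + s) / (lam + s))) atTop (nhds 0) := by
    have := (Real.continuousAt_log one_ne_zero).tendsto.comp h2
    simpa [Function.comp_def] using this
  apply h3.congr'
  filter_upwards [eventually_gt_atTop 0] with s hs
  rw [Real.log_div (by positivity) (by positivity)]

lemma scalar_log_integrable {lam : ℝ} (hlam : 0 < lam) :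
    IntegrableOn (fun s => 1/(1+s) - 1/(lam+s)) (Ioi (0:ℝ)) := by
  rcases le_total 1 lam with h | h
  · exact integrableOn_Ioi_deriv_of_nonneg' (g := fun s => Real.log (1+s) - Real.log (lam+s))
      (fun x hx => scalar_log_deriv hlam hx)
      (fun x hx => by
        have hx0 : (0:ℝ) < x := hx
        have : (0:ℝ) < 1 + x := by linarith
        have : (0:ℝ) < lam + x := by linarith
        rw [sub_nonneg, one_div, one_div]
        exact inv_anti₀ (by linarith) (by linarith))
      (scalar_log_tendsto hlam)
  · exact integrableOn_Ioi_deriv_of_nonpos' (g := fun s => Real.log (1+s) - Real.log (lam+s))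
      (fun x hx => scalar_log_deriv hlam hx)
      (fun x hx => by
        have hx0 : (0:ℝ) < x := hx
        rw [sub_nonpos, one_div, one_div]
        exact inv_anti₀ (by linarith) (by linarith))
      (scalar_log_tendsto hlam)

lemma scalar_log_integral {lam : ℝ} (hlam : 0 < lam) :
    ∫ s in Ioi (0:ℝ), (1/(1+s) - 1/(lam+s)) = Real.log lam := by
  have := integral_Ioi_of_hasDerivAt_of_tendsto'
    (f := fun s => Real.log (1+s) - Real.log (lam+s))
    (f' := fun s => 1/(1+s) - 1/(lam+s))
    (fun x hx => scalar_log_deriv hlam hx)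
    (scalar_log_integrable hlam)
    (scalar_log_tendsto hlam)
  simpa using this
lemma star_mulVec_dotProduct (M N : Matrix (Fin n) (Fin n) ℂ) (a b : Fin n → ℂ) :
    star (M *ᵥ a) ⬝ᵥ (N *ᵥ b) = star a ⬝ᵥ ((Mᴴ * N) *ᵥ b) := by
  rw [star_mulVec, ← Matrix.dotProduct_mulVec, mulVec_mulVec]

lemma star_mulVec_dotProduct' (M : Matrix (Fin n) (Fin n) ℂ) (a b : Fin n → ℂ) :
    star (M *ᵥ a) ⬝ᵥ b = star a ⬝ᵥ (Mᴴ *ᵥ b) := by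
  rw [star_mulVec, ← Matrix.dotProduct_mulVec]

lemma inv_sub_inv_posSemidef (hA : A.PosDef) (hB : B.PosDef)
    (hAB : (B - A).PosSemidef) : (A⁻¹ - B⁻¹).PosSemidef := by
  have hAH : A⁻¹.IsHermitian := hA.isHermitian.inv
  have hBH : B⁻¹.IsHermitian := hB.isHermitian.inv
  have hAinv : A⁻¹ * A = 1 := nonsing_inv_mul A (hA.isUnit.map (Matrix.detMonoidHom))
  have hBinv : B * B⁻¹ = 1 := mul_nonsing_inv B (hB.isUnit.map (Matrix.detMonoidHom))
  refine Matrix.PosSemidef.of_dotProduct_mulVec_nonneg (hAH.sub hBH) (fun x => ?_)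
  set y := B⁻¹ *ᵥ x with hy
  set w := A⁻¹ *ᵥ x with hw
  have e1 : star w ⬝ᵥ (A *ᵥ y) = star x ⬝ᵥ y := by
    rw [hw, star_mulVec_dotProduct, hAH.eq, hAinv, one_mulVec]
  have e2 : star y ⬝ᵥ (A *ᵥ w) = star y ⬝ᵥ x := by
    rw [hw, mulVec_mulVec, mul_nonsing_inv A (hA.isUnit.map (Matrix.detMonoidHom)), one_mulVec]
  have e3 : star w ⬝ᵥ (A *ᵥ w) = star x ⬝ᵥ (A⁻¹ *ᵥ x) := by
    rw [hw, star_mulVec_dotProduct, hAH.eq, hAinv, one_mulVec]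
  have e4 : star y ⬝ᵥ (B *ᵥ y) = star x ⬝ᵥ (B⁻¹ *ᵥ x) := by
    rw [hy, mulVec_mulVec, hBinv, one_mulVec]
    rw [star_mulVec_dotProduct' B⁻¹ x x, hBH.eq]
  have e5 : star y ⬝ᵥ x = star x ⬝ᵥ (B⁻¹ *ᵥ x) := by
    rw [hy, star_mulVec_dotProduct', hBH.eq]
  have e6 : star x ⬝ᵥ y = star x ⬝ᵥ (B⁻¹ *ᵥ x) := rfl
  have key : star x ⬝ᵥ ((A⁻¹ - B⁻¹) *ᵥ x) =
      star (y - w) ⬝ᵥ (A *ᵥ (y - w)) + star y ⬝ᵥ ((B - A) *ᵥ y) := by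
    rw [sub_mulVec, dotProduct_sub, sub_mulVec, dotProduct_sub, mulVec_sub, dotProduct_sub,
      star_sub, sub_dotProduct, sub_dotProduct]
    rw [e1, e2, e3, e4, e5, e6]
    ring
  rw [key]
  exact add_nonneg (hA.posSemidef.dotProduct_mulVec_nonneg _) (hAB.dotProduct_mulVec_nonneg _)

lemma mcfc_add_const (hA : A.IsHermitian) (s : ℝ) :
    hA.cfc (fun l => l + s) = A + (s : ℂ) • 1 := by
  rw [← mcfc_add hA (fun x => x) (fun _ => s), mcfc_id hA, mcfc_const hA s]

lemma matLog_sub_posSemidef (hA : A.PosDef) (hB : B.PosDef) (hAB : (B - A).PosSemidef) :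
    (matLog B - matLog A).PosSemidef := by
  have hAh := hA.isHermitian
  have hBh := hB.isHermitian
  refine Matrix.PosSemidef.of_dotProduct_mulVec_nonneg ?_ ?_
  · rw [matLog_eq_cfc' hBh, matLog_eq_cfc' hAh]
    exact (mcfc_isHermitian hBh _).sub (mcfc_isHermitian hAh _)
  intro x
  set lA := hAh.eigenvalues with hlA
  set lB := hBh.eigenvalues with hlB
  set cA : Fin n → ℝ := fun k =>
    ‖((star (hAh.eigenvectorUnitary : Matrix (Fin n) (Fin n) ℂ)) *ᵥ x) k‖ ^ 2 with hcA
  set cB : Fin n → ℝ := fun k =>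
    ‖((star (hBh.eigenvectorUnitary : Matrix (Fin n) (Fin n) ℂ)) *ᵥ x) k‖ ^ 2 with hcB
  have hlAp : ∀ k, 0 < lA k := fun k => hA.eigenvalues_pos k
  have hlBp : ∀ k, 0 < lB k := fun k => hB.eigenvalues_pos k
  have hcAp : ∀ k, 0 ≤ cA k := fun k => by positivity
  have hcBp : ∀ k, 0 ≤ cB k := fun k => by positivity
  -- the quadratic forms of any cfc
  have hqA : ∀ f : ℝ → ℝ, star x ⬝ᵥ (hAh.cfc f *ᵥ x) = ((∑ k, f (lA k) * cA k : ℝ) : ℂ) :=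
    fun f => quadForm hAh f x
  have hqB : ∀ f : ℝ → ℝ, star x ⬝ᵥ (hBh.cfc f *ᵥ x) = ((∑ k, f (lB k) * cB k : ℝ) : ℂ) :=
    fun f => quadForm hBh f x
  -- equal total masses
  have hmass : ∑ k, cA k = ∑ k, cB k := by
    have h1 := hqA (fun _ => 1)
    have h2 := hqB (fun _ => 1)
    rw [mcfc_one hAh] at h1
    rw [mcfc_one hBh] at h2
    simp only [one_mul] at h1 h2
    exact_mod_cast h1.symm.trans h2
  -- pointwise monotonicity of the resolvent quadratic forms
  have hmono : ∀ s ∈ Ioi (0:ℝ),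
      ∑ k, cB k * (1/(lB k + s)) ≤ ∑ k, cA k * (1/(lA k + s)) := by
    intro s hs
    have hs0 : (0:ℝ) < s := hs
    have hAs : (hAh.cfc (fun l => l + s)).PosDef :=
      mcfc_posDef hAh (fun k => by
        have := hlAp k; exact (by linarith : (0:ℝ) < hAh.eigenvalues k + s))
    have hBs : (hBh.cfc (fun l => l + s)).PosDef :=
      mcfc_posDef hBh (fun k => by
        have := hlBp k; exact (by linarith : (0:ℝ) < hBh.eigenvalues k + s))
    have hdiff : (hBh.cfc (fun l => l + s) - hAh.cfc (fun l => l + s)).PosSemidef := by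
      rw [mcfc_add_const hBh s, mcfc_add_const hAh s]
      have : B + (s:ℂ) • 1 - (A + (s:ℂ) • 1) = B - A := by abel
      rw [this]; exact hAB
    have key := (inv_sub_inv_posSemidef hAs hBs hdiff).dotProduct_mulVec_nonneg x
    rw [mcfc_inv hAh (f := fun l => l + s) (fun k => by
          have := hlAp k; exact (by linarith : (0:ℝ) < hAh.eigenvalues k + s).ne'),
        mcfc_inv hBh (f := fun l => l + s) (fun k => by
          have := hlBp k; exact (by linarith : (0:ℝ) < hBh.eigenvalues k + s).ne')] at key
    rw [sub_mulVec, dotProduct_sub, hqA (fun l => (l + s)⁻¹), hqB (fun l => (l + s)⁻¹)] at key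
    rw [← Complex.ofReal_sub, Complex.zero_le_real, sub_nonneg] at key
    simpa [one_div, mul_comm] using key
  -- integral representation
  have hintA : IntegrableOn (fun s => ∑ k, cA k * (1/(1+s) - 1/(lA k + s))) (Ioi (0:ℝ)) :=
    integrable_finset_sum _ (fun k _ => ((scalar_log_integrable (hlAp k)).const_mul (cA k)))
  have hintB : IntegrableOn (fun s => ∑ k, cB k * (1/(1+s) - 1/(lB k + s))) (Ioi (0:ℝ)) :=
    integrable_finset_sum _ (fun k _ => ((scalar_log_integrable (hlBp k)).const_mul (cB k)))
  have hvalA : ∫ s in Ioi (0:ℝ), (∑ k, cA k * (1/(1+s) - 1/(lA k + s)))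
      = ∑ k, cA k * Real.log (lA k) := by
    rw [MeasureTheory.integral_finset_sum _
      (fun k _ => ((scalar_log_integrable (hlAp k)).const_mul (cA k)))]
    refine Finset.sum_congr rfl (fun k _ => ?_)
    rw [MeasureTheory.integral_const_mul, scalar_log_integral (hlAp k)]
  have hvalB : ∫ s in Ioi (0:ℝ), (∑ k, cB k * (1/(1+s) - 1/(lB k + s)))
      = ∑ k, cB k * Real.log (lB k) := by
    rw [MeasureTheory.integral_finset_sum _
      (fun k _ => ((scalar_log_integrable (hlBp k)).const_mul (cB k)))]
    refine Finset.sum_congr rfl (fun k _ => ?_)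
    rw [MeasureTheory.integral_const_mul, scalar_log_integral (hlBp k)]
  have hle : ∑ k, cA k * Real.log (lA k) ≤ ∑ k, cB k * Real.log (lB k) := by
    rw [← hvalA, ← hvalB]
    refine setIntegral_mono_on hintA hintB measurableSet_Ioi (fun s hs => ?_)
    have h1 : ∀ (c l : Fin n → ℝ), ∑ k, c k * (1/(1+s) - 1/(l k + s))
        = (∑ k, c k) * (1/(1+s)) - ∑ k, c k * (1/(l k + s)) := by
      intro c l
      rw [Finset.sum_mul, ← Finset.sum_sub_distrib]
      refine Finset.sum_congr rfl (fun k _ => by ring)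
    rw [h1 cA lA, h1 cB lB, hmass]
    have := hmono s hs
    linarith
  -- conclude
  rw [sub_mulVec, dotProduct_sub, matLog_eq_cfc' hBh, matLog_eq_cfc' hAh,
    hqA Real.log, hqB Real.log, ← Complex.ofReal_sub, Complex.zero_le_real, sub_nonneg]
  calc ∑ k, Real.log (lA k) * cA k = ∑ k, cA k * Real.log (lA k) := by
        refine Finset.sum_congr rfl (fun k _ => mul_comm _ _)
    _ ≤ ∑ k, cB k * Real.log (lB k) := hle
    _ = ∑ k, Real.log (lB k) * cB k := by
        refine Finset.sum_congr rfl (fun k _ => mul_comm _ _)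

end parts


variable {n : ℕ} {M N : Matrix (Fin n) (Fin n) ℂ}

lemma real_smul_eq (t : ℝ) (M : Matrix (Fin n) (Fin n) ℂ) : t • M = (t : ℂ) • M := by
  ext i j
  simp [Complex.real_smul]

lemma posDef_rsmul (hM : M.PosDef) {t : ℝ} (ht : 0 < t) : (t • M).PosDef := by
  rw [real_smul_eq]
  refine Matrix.PosDef.of_dotProduct_mulVec_pos ?_ ?_
  · rw [Matrix.IsHermitian, conjTranspose_smul, hM.isHermitian.eq]
    congr 1
    simp
  · intro x hx
    rw [smul_mulVec, dotProduct_smul, smul_eq_mul]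
    exact mul_pos (Complex.zero_lt_real.mpr ht) (hM.dotProduct_mulVec_pos hx)

lemma posSemidef_rsmul (hM : M.PosSemidef) {t : ℝ} (ht : 0 ≤ t) : (t • M).PosSemidef := by
  rw [real_smul_eq]
  refine Matrix.PosSemidef.of_dotProduct_mulVec_nonneg ?_ ?_
  · rw [Matrix.IsHermitian, conjTranspose_smul, hM.isHermitian.eq]
    congr 1
    simp
  · intro x
    rw [smul_mulVec, dotProduct_smul, smul_eq_mul]
    exact mul_nonneg (Complex.zero_le_real.mpr ht) (hM.dotProduct_mulVec_nonneg x)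

lemma trace_re_nonneg (hM : M.PosSemidef) : 0 ≤ (Matrix.trace M).re := by
  have h : ∀ i, 0 ≤ M i i := by
    intro i
    have := hM.dotProduct_mulVec_nonneg (Pi.single i 1)
    have heq : star (Pi.single i 1) ⬝ᵥ (M *ᵥ Pi.single i 1) = M i i := by
      simp only [dotProduct, mulVec, Pi.star_apply, Pi.single_apply]
      simp [apply_ite, Finset.sum_ite_eq, Finset.sum_ite_eq']
    rwa [heq] at this
  have : (0:ℂ) ≤ Matrix.trace M := Finset.sum_nonneg (fun i _ => h i)
  exact (Complex.le_def.mp this).1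

lemma trace_mul_re_nonneg (hM : M.PosSemidef) (hN : N.PosSemidef) :
    0 ≤ (Matrix.trace (M * N)).re := by
  obtain ⟨C, hC⟩ : ∃ C : Matrix (Fin n) (Fin n) ℂ, N = Cᴴ * C := by
    open scoped MatrixOrder Matrix.Norms.L2Operator in
    exact CStarAlgebra.nonneg_iff_eq_star_mul_self.mp hN.nonneg
  have h1 : Matrix.trace (M * N) = Matrix.trace (C * M * Cᴴ) := by
    rw [hC, show M * (Cᴴ * C) = (M * Cᴴ) * C by rw [mul_assoc],
      Matrix.trace_mul_comm, mul_assoc]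
  rw [h1]
  exact trace_re_nonneg (hM.mul_mul_conjTranspose_same C)


variable {ρ : Matrix (Fin n) (Fin n) ℂ}

lemma matLog_smul (hρ : ρ.PosDef) {t : ℝ} (ht : 0 < t) :
    matLog (t • ρ) = (Real.log t : ℂ) • 1 + matLog ρ := by
  have hsm : (t • ρ).IsHermitian := (posDef_rsmul hρ ht).isHermitian
  rw [matLog_eq_cfc hsm, matLog_eq_cfc hρ.isHermitian]
  have ha₂ : ∀ x ∈ spectrum ℝ ρ, 0 < x := by
    intro x hx
    rw [hρ.isHermitian.spectrum_real_eq_range_eigenvalues] at hx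
    obtain ⟨i, rfl⟩ := hx
    exact hρ.eigenvalues_pos i
  have ha₁ : IsSelfAdjoint ρ := hρ.isHermitian
  have hne : ∀ x ∈ spectrum ℝ ρ, x ≠ 0 := by peel ha₂ with x hx h; exact h.ne'
  have main : cfc Real.log (t • ρ) = algebraMap ℝ _ (Real.log t) + cfc Real.log ρ := by
    rw [← cfc_smul_id (R := ℝ) t ρ, ← cfc_comp Real.log (t • ·) ρ]
    calc
      _ = cfc (fun z => Real.log t + Real.log z) ρ :=
        cfc_congr (Real.log_mul ht.ne' <| ne_of_gt <| ha₂ · ·)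
      _ = _ := by rw [cfc_const_add _ _ _]
  rw [main]
  congr 1
  rw [Algebra.algebraMap_eq_smul_one, real_smul_eq]

end helpers

/-- **Almost-affinity lower bound for the relative entropy** (finite-dimensional version
of the estimate proved via operator monotonicity of the inverse and the logarithm):
for positive definite density matrices `ρ₁, ρ₂, σ` and `t ∈ (0,1)`,
`S(tρ₁ + (1−t)ρ₂ ‖ σ) ≥ t S(ρ₁‖σ) + (1−t) S(ρ₂‖σ) + t log t + (1−t) log (1−t)`. -/
theorem relEnt_convex_combination_lower_bound {n : ℕ} (hn : 1 ≤ n)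
    (ρ₁ ρ₂ σ : Matrix (Fin n) (Fin n) ℂ)
    (hρ₁ : ρ₁.PosDef) (hρ₂ : ρ₂.PosDef) (hσ : σ.PosDef)
    (hρ₁tr : Matrix.trace ρ₁ = 1) (hρ₂tr : Matrix.trace ρ₂ = 1)
    (hσtr : Matrix.trace σ = 1)
    (t : ℝ) (ht : t ∈ Set.Ioo (0 : ℝ) 1) :
    t * relEnt ρ₁ σ + (1 - t) * relEnt ρ₂ σ + t * Real.log t + (1 - t) * Real.log (1 - t)
      ≤ relEnt (t • ρ₁ + (1 - t) • ρ₂) σ := by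
  obtain ⟨ht0, ht1⟩ := ht
  have ht1' : (0:ℝ) < 1 - t := by linarith
  set ρ := t • ρ₁ + (1 - t) • ρ₂ with hρdef
  have hρ : ρ.PosDef :=
    (posDef_rsmul hρ₁ ht0).add_posSemidef (posSemidef_rsmul hρ₂.posSemidef ht1'.le)
  have key : ∀ (ρi : Matrix (Fin n) (Fin n) ℂ), ρi.PosDef → Matrix.trace ρi = 1 →
      ∀ (s : ℝ), 0 < s → (ρ - s • ρi).PosSemidef →
      Real.log s ≤ (Matrix.trace (ρi * (matLog ρ - matLog ρi))).re := by
    intro ρi hρi htri s hs0 hsub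
    have hLs : matLog (s • ρi) = (Real.log s : ℂ) • 1 + matLog ρi := matLog_smul hρi hs0
    have hP : (matLog ρ - matLog (s • ρi)).PosSemidef :=
      matLog_sub_posSemidef (posDef_rsmul hρi hs0) hρ hsub
    have hsplit : matLog ρ - matLog ρi
        = (matLog ρ - matLog (s • ρi)) + (Real.log s : ℂ) • 1 := by
      rw [hLs]; abel
    rw [hsplit, mul_add, Matrix.trace_add]
    have h2 : Matrix.trace (ρi * ((Real.log s : ℂ) • 1)) = (Real.log s : ℂ) := by
      rw [Matrix.mul_smul, mul_one, Matrix.trace_smul, htri, smul_eq_mul, mul_one]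
    rw [h2, Complex.add_re, Complex.ofReal_re]
    have h3 := trace_mul_re_nonneg hρi.posSemidef hP
    linarith
  have k1 : Real.log t ≤ (Matrix.trace (ρ₁ * (matLog ρ - matLog ρ₁))).re := by
    refine key ρ₁ hρ₁ hρ₁tr t ht0 ?_
    have h : ρ - t • ρ₁ = (1 - t) • ρ₂ := by rw [hρdef]; abel
    rw [h]
    exact posSemidef_rsmul hρ₂.posSemidef ht1'.le
  have k2 : Real.log (1 - t) ≤ (Matrix.trace (ρ₂ * (matLog ρ - matLog ρ₂))).re := by
    refine key ρ₂ hρ₂ hρ₂tr (1 - t) ht1' ?_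
    have h : ρ - (1 - t) • ρ₂ = t • ρ₁ := by rw [hρdef]; abel
    rw [h]
    exact posSemidef_rsmul hρ₁.posSemidef ht0.le
  -- decomposition of the relative entropy
  have hdec : relEnt ρ σ = t * relEnt ρ₁ σ + (1 - t) * relEnt ρ₂ σ
      + t * (Matrix.trace (ρ₁ * (matLog ρ - matLog ρ₁))).re
      + (1 - t) * (Matrix.trace (ρ₂ * (matLog ρ - matLog ρ₂))).re := by
    have e1 : ∀ (ρi : Matrix (Fin n) (Fin n) ℂ),
        Matrix.trace (ρi * (matLog ρ - matLog σ))
          = Matrix.trace (ρi * (matLog ρi - matLog σ))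
            + Matrix.trace (ρi * (matLog ρ - matLog ρi)) := by
      intro ρi
      rw [← Matrix.trace_add, ← mul_add]
      congr 2
      abel
    have e2 : Matrix.trace (ρ * (matLog ρ - matLog σ))
        = (t:ℂ) * Matrix.trace (ρ₁ * (matLog ρ - matLog σ))
          + ((1:ℂ) - t) * Matrix.trace (ρ₂ * (matLog ρ - matLog σ)) := by
      rw [hρdef, real_smul_eq, real_smul_eq, add_mul, smul_mul_assoc, smul_mul_assoc,
        Matrix.trace_add, Matrix.trace_smul, Matrix.trace_smul]
      push_cast
      simp [smul_eq_mul]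
    unfold relEnt
    rw [e2, e1 ρ₁, e1 ρ₂]
    simp only [mul_add, Complex.add_re, Complex.mul_re]
    push_cast
    ring_nf
    simp [Complex.ofReal_re, Complex.ofReal_im]
    ring
  rw [hdec]
  have m1 := mul_le_mul_of_nonneg_left k1 ht0.le
  have m2 := mul_le_mul_of_nonneg_left k2 ht1'.le
  linarith
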